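/- Assume a random tournament T on n alternatives a_1,...,a_n is generated with independent edges where, for all i > j, the probability of the edge a_i → a_j is at most 0.6·√(log n / n). Then the probability that a_n is a king (can reach every other alternative by a directed path of length at most two) tends to 0 as n → ∞; hence with high probability the uncovered set UC(T) ≠ A. -/

import Mathlib

/-- The set of (unordered) edges of a tournament on `n` alternatives, represented by the
ordered pairs `(i, j)` with `i < j`. -/
abbrev Edges (n : ℕ) := {q : Fin n × Fin n // q.1 < q.2}

/-- An orientation of all edges: `σ e = true` means the edge `e = (i, j)` (with `i < j`)
is oriented from `a_i` to `a_j`. A tournament is exactly such an orientation. -/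
abbrev Orient (n : ℕ) := Edges n → Bool

/-- `a_i` dominates `a_j` in the tournament given by the orientation `σ`. -/
def beats {n : ℕ} (σ : Orient n) (i j : Fin n) : Prop :=
  (∃ h : i < j, σ ⟨(i, j), h⟩ = true) ∨ (∃ h : j < i, σ ⟨(j, i), h⟩ = false)

/-- The probability of obtaining the particular tournament `σ` when each edge `(i, j)`
(`i < j`) is independently oriented from `a_i` to `a_j` with probability `p i j`. -/
noncomputable def prOf {n : ℕ} (p : Fin n → Fin n → ℝ) (σ : Orient n) : ℝ :=
  ∏ e : Edges n, if σ e = true then p e.1.1 e.1.2 else 1 - p e.1.1 e.1.2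

/-- The probability of the event `E` under the independent-edge random tournament model
with edge probabilities `p`. -/
noncomputable def Pr {n : ℕ} (p : Fin n → Fin n → ℝ) (E : Set (Orient n)) : ℝ :=
  ∑ σ : Orient n, E.indicator (prOf p) σ

namespace Aux
open Finset

lemma sum_prod_bool {α : Type*} [Fintype α] [DecidableEq α] (f : α → Bool → ℝ) :
    ∑ τ : α → Bool, ∏ a, f a (τ a) = ∏ a, (f a true + f a false) := by
  calc ∑ τ : α → Bool, ∏ a, f a (τ a)
      = ∑ τ ∈ Fintype.piFinset (fun _ : α => (univ : Finset Bool)), ∏ a, f a (τ a) := by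
        rw [Fintype.piFinset_univ]
    _ = ∏ a, ∑ b ∈ (univ : Finset Bool), f a b := (Finset.prod_univ_sum _ _).symm
    _ = ∏ a, (f a true + f a false) := by simp [add_comm]

variable {m : ℕ}

/-- shorthand for the probability of an edge being oriented `true`. -/
abbrev pv (p : Fin m → Fin m → ℝ) (e : Edges m) : ℝ := p e.1.1 e.1.2

lemma key (p : Fin m → Fin m → ℝ) (t : Finset (Edges m)) (g : Edges m → Bool → ℝ) :
    ∑ σ : Orient m, prOf p σ * ∏ e ∈ t, g e (σ e)
      = ∏ e ∈ t, (pv p e * g e true + (1 - pv p e) * g e false) := by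
  classical
  have h1 : ∀ σ : Orient m, prOf p σ * ∏ e ∈ t, g e (σ e)
      = ∏ e : Edges m, ((if σ e = true then pv p e else 1 - pv p e) *
          (if e ∈ t then g e (σ e) else 1)) := by
    intro σ
    unfold prOf
    rw [Finset.prod_mul_distrib, Finset.prod_ite_mem, Finset.univ_inter]
  have h2 := sum_prod_bool (fun (e : Edges m) (b : Bool) =>
      (if b = true then pv p e else 1 - pv p e) * (if e ∈ t then g e b else 1))
  calc ∑ σ : Orient m, prOf p σ * ∏ e ∈ t, g e (σ e)
      = ∑ σ : Orient m, ∏ e : Edges m, ((if σ e = true then pv p e else 1 - pv p e) *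
          (if e ∈ t then g e (σ e) else 1)) := Finset.sum_congr rfl fun σ _ => h1 σ
    _ = ∏ e : Edges m, ((if (true : Bool) = true then pv p e else 1 - pv p e) *
          (if e ∈ t then g e true else 1) +
        (if (false : Bool) = true then pv p e else 1 - pv p e) *
          (if e ∈ t then g e false else 1)) := h2
    _ = ∏ e : Edges m, (if e ∈ t then pv p e * g e true + (1 - pv p e) * g e false else 1) := by
        refine Finset.prod_congr rfl fun e _ => ?_
        by_cases he : e ∈ t <;> simp [he]
    _ = ∏ e ∈ t, (pv p e * g e true + (1 - pv p e) * g e false) := by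
        rw [Finset.prod_ite_mem, Finset.univ_inter]

lemma total_mass (p : Fin m → Fin m → ℝ) : ∑ σ : Orient m, prOf p σ = 1 := by
  have := key p ∅ (fun _ _ => 1)
  simpa using this

lemma prOf_nonneg {p : Fin m → Fin m → ℝ} (h0 : ∀ e : Edges m, 0 ≤ pv p e)
    (h1 : ∀ e : Edges m, pv p e ≤ 1) (σ : Orient m) : 0 ≤ prOf p σ := by
  refine Finset.prod_nonneg fun e _ => ?_
  by_cases hb : σ e = true
  · simpa [hb] using h0 e
  · have := h1 e
    simp only [pv] at this
    simp [hb]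
    linarith

lemma Pr_le_sum {p : Fin m → Fin m → ℝ} (h0 : ∀ e : Edges m, 0 ≤ pv p e)
    (h1 : ∀ e : Edges m, pv p e ≤ 1) {E : Set (Orient m)} (G : Orient m → ℝ)
    (hG1 : ∀ σ ∈ E, 1 ≤ G σ) (hG0 : ∀ σ, 0 ≤ G σ) :
    Pr p E ≤ ∑ σ : Orient m, prOf p σ * G σ := by
  classical
  refine Finset.sum_le_sum fun σ _ => ?_
  rw [Set.indicator_apply]
  by_cases hσ : σ ∈ E
  · simpa [hσ] using mul_le_mul_of_nonneg_left (hG1 σ hσ) (prOf_nonneg h0 h1 σ)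
  · simp [hσ]
    exact mul_nonneg (prOf_nonneg h0 h1 σ) (hG0 σ)

lemma Pr_nonneg {p : Fin m → Fin m → ℝ} (h0 : ∀ e : Edges m, 0 ≤ pv p e)
    (h1 : ∀ e : Edges m, pv p e ≤ 1) (E : Set (Orient m)) : 0 ≤ Pr p E := by
  classical
  refine Finset.sum_nonneg fun σ _ => ?_
  rw [Set.indicator_apply]
  by_cases hσ : σ ∈ E <;> simp [hσ, prOf_nonneg h0 h1 σ]

lemma Pr_mono {p : Fin m → Fin m → ℝ} (h0 : ∀ e : Edges m, 0 ≤ pv p e)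
    (h1 : ∀ e : Edges m, pv p e ≤ 1) {E F : Set (Orient m)} (hEF : E ⊆ F) :
    Pr p E ≤ Pr p F := by
  classical
  refine Finset.sum_le_sum fun σ _ => ?_
  rw [Set.indicator_apply, Set.indicator_apply]
  by_cases hσ : σ ∈ E
  · simp [hσ, hEF hσ]
  · by_cases hσ' : σ ∈ F <;> simp [hσ, hσ', prOf_nonneg h0 h1 σ]

lemma Pr_union_le {p : Fin m → Fin m → ℝ} (h0 : ∀ e : Edges m, 0 ≤ pv p e)
    (h1 : ∀ e : Edges m, pv p e ≤ 1) (E F : Set (Orient m)) :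
    Pr p (E ∪ F) ≤ Pr p E + Pr p F := by
  classical
  rw [Pr, Pr, Pr, ← Finset.sum_add_distrib]
  refine Finset.sum_le_sum fun σ _ => ?_
  rw [Set.indicator_apply, Set.indicator_apply, Set.indicator_apply]
  by_cases hE : σ ∈ E <;> by_cases hF : σ ∈ F <;>
    simp [hE, hF, prOf_nonneg h0 h1 σ]


section Tournament
open Finset
variable {n : ℕ}

/-- the edge from vertex `l` (among the first `n`) to the last vertex. -/
def eL (l : Fin n) : Edges (n + 1) :=
  ⟨(l.castSucc, Fin.last n), Fin.castSucc_lt_last l⟩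

/-- the edge between `j` and `l` (for `j < l`), junk value otherwise. -/
def pEdge (j l : Fin n) : Edges (n + 1) :=
  if h : j < l then ⟨(j.castSucc, l.castSucc), Fin.castSucc_lt_castSucc_iff.2 h⟩ else eL l

lemma eL_injective : Function.Injective (eL (n := n)) := by
  intro a b hab
  have := congrArg (fun e : Edges (n+1) => (e.1.1 : Fin (n+1))) hab
  simpa [eL, Fin.castSucc_inj] using this

variable (σ : Orient (n + 1))

def Dset (σ : Orient (n + 1)) : Finset (Fin n) :=
  univ.filter (fun l => σ (eL l) = false)

def Tset (M : ℕ) : Finset (Fin n) := univ.filter (fun j : Fin n => (j : ℕ) < M)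

def EvA (M : ℕ) : Set (Orient (n + 1)) :=
  {σ | ∃ j : Fin n, (j : ℕ) < M ∧ σ (eL j) = false}

def EvB (K : ℕ) : Set (Orient (n + 1)) := {σ | K ≤ (Dset σ).card}

def EvC (M K : ℕ) : Set (Orient (n + 1)) :=
  {σ | ∃ S : Finset (Fin n), S.card < K ∧
    (∀ l : Fin n, l ∈ S ↔ (M ≤ (l : ℕ) ∧ σ (eL l) = false)) ∧
    (∀ j : Fin n, (j : ℕ) < M → ∃ l ∈ S, j < l ∧ σ (pEdge j l) = false)}

def King : Set (Orient (n + 1)) :=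
  {σ | ∀ j : Fin (n + 1), j ≠ Fin.last n → beats σ (Fin.last n) j ∨
      ∃ l : Fin (n + 1), beats σ (Fin.last n) l ∧ beats σ l j}

lemma beats_from_last {σ : Orient (n+1)} {y : Fin (n + 1)}
    (h : beats σ (Fin.last n) y) : ∃ l : Fin n, y = l.castSucc ∧ σ (eL l) = false := by
  rcases h with ⟨hlt, -⟩ | ⟨hlt, hσ⟩
  · exact absurd hlt (not_lt.2 (Fin.le_last y))
  · have hy : y ≠ Fin.last n := ne_of_lt hlt
    refine ⟨y.castPred hy, (Fin.castSucc_castPred y hy).symm, ?_⟩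
    have he : eL (y.castPred hy) = ⟨(y, Fin.last n), hlt⟩ := by
      apply Subtype.ext
      simp [eL, Fin.castSucc_castPred]
    rw [he]
    exact hσ

lemma beats_castSucc {σ : Orient (n+1)} {j l : Fin n} (hjl : j < l)
    (h : beats σ l.castSucc j.castSucc) : σ (pEdge j l) = false := by
  rcases h with ⟨hlt, -⟩ | ⟨hlt, hσ⟩
  · exact absurd (Fin.castSucc_lt_castSucc_iff.1 hlt) (asymm hjl)
  · have he : pEdge j l = ⟨(j.castSucc, l.castSucc), hlt⟩ := by
      rw [pEdge, dif_pos hjl]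
    rw [he]
    exact hσ

lemma king_subset (M K : ℕ) : (King : Set (Orient (n+1))) ⊆ EvA M ∪ EvB K ∪ EvC M K := by
  intro σ hσ
  by_cases hA : σ ∈ EvA M
  · exact Or.inl (Or.inl hA)
  by_cases hB : σ ∈ EvB K
  · exact Or.inl (Or.inr hB)
  refine Or.inr ?_
  refine ⟨univ.filter (fun l => M ≤ (l : ℕ) ∧ σ (eL l) = false), ?_, ?_, ?_⟩
  · have hsub : univ.filter (fun l : Fin n => M ≤ (l : ℕ) ∧ σ (eL l) = false) ⊆ Dset σ := by
      intro l hl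
      simp only [Dset, mem_filter, mem_univ, true_and] at hl ⊢
      exact hl.2
    have := Finset.card_le_card hsub
    have hcard : (Dset σ).card < K := not_le.1 hB
    omega
  · intro l; simp
  · intro j hj
    have hne : j.castSucc ≠ Fin.last n := ne_of_lt (Fin.castSucc_lt_last j)
    rcases hσ j.castSucc hne with hbeat | ⟨l', hb1, hb2⟩
    · rcases beats_from_last hbeat with ⟨l, hl, hσl⟩
      have : l = j := Fin.castSucc_injective n hl.symm
      subst this
      exact absurd ⟨l, hj, hσl⟩ hA
    · rcases beats_from_last hb1 with ⟨l, hl, hσl⟩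
      subst hl
      have hMl : M ≤ (l : ℕ) := by
        by_contra hlt
        exact hA ⟨l, not_le.1 hlt, hσl⟩
      have hjl : j < l := by
        have : (j : ℕ) < (l : ℕ) := lt_of_lt_of_le hj hMl
        exact this
      refine ⟨l, ?_, hjl, beats_castSucc hjl hb2⟩
      simp [hMl, hσl]


end Tournament

section Bounds
open Finset
variable {n : ℕ} {p : Fin (n+1) → Fin (n+1) → ℝ} {q : ℝ}

lemma card_Tset_le (M : ℕ) : (Tset (n := n) M).card ≤ M := by
  classical
  have : (Tset (n := n) M).card ≤ (Finset.range M).card := by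
    refine Finset.card_le_card_of_injOn (fun j => (j : ℕ)) ?_ ?_
    · intro j hj
      have hj' : (j : ℕ) < M := by simpa [Tset] using hj
      exact Finset.mem_coe.2 (Finset.mem_range.2 hj')
    · intro a _ b _ hab
      exact Fin.val_injective hab
  simpa using this

lemma card_Tset (M : ℕ) (hMn : M ≤ n) : (Tset (n := n) M).card = M := by
  classical
  have h := Finset.card_bij' (s := Tset (n := n) M) (t := Finset.range M)
    (i := fun j _ => (j : ℕ))
    (j := fun i hi => (⟨i, lt_of_lt_of_le (Finset.mem_range.1 hi) hMn⟩ : Fin n))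
    (fun a ha => by
      simp only [Tset, mem_filter] at ha
      exact Finset.mem_range.2 ha.2)
    (fun a ha => by
      simp only [Tset, mem_filter, mem_univ, true_and]
      exact Finset.mem_range.1 ha)
    (fun a ha => rfl)
    (fun a ha => rfl)
  simpa using h

lemma PrA_le (h0 : ∀ e : Edges (n+1), 0 ≤ pv p e) (h1 : ∀ e : Edges (n+1), pv p e ≤ 1)
    (hpq : ∀ e : Edges (n+1), 1 - pv p e ≤ q) (hq0 : 0 ≤ q) (M : ℕ) :
    Pr p (EvA M) ≤ M * q := by
  classical
  have step := Pr_le_sum h0 h1 (E := EvA M)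
      (fun σ => ∑ j ∈ Tset M, (if σ (eL j) = false then (1:ℝ) else 0))
      (fun σ hσ => by
        rcases hσ with ⟨j, hjM, hjf⟩
        have hjT : j ∈ Tset (n := n) M := by simp [Tset, hjM]
        have := Finset.single_le_sum
          (f := fun j' => (if σ (eL j') = false then (1:ℝ) else 0))
          (fun j' _ => by positivity) hjT
        simpa [hjf] using this)
      (fun σ => Finset.sum_nonneg fun j _ => by positivity)
  refine le_trans step ?_
  have hswap : ∑ σ : Orient (n+1), prOf p σ * ∑ j ∈ Tset (n := n) M, (if σ (eL j) = false then (1:ℝ) else 0)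
      = ∑ j ∈ Tset (n := n) M, ∑ σ : Orient (n+1), prOf p σ * (if σ (eL j) = false then (1:ℝ) else 0) := by
    simp_rw [Finset.mul_sum]
    rw [Finset.sum_comm]
  rw [hswap]
  have hone : ∀ j : Fin n, ∑ σ : Orient (n+1), prOf p σ * (if σ (eL j) = false then (1:ℝ) else 0)
      = 1 - pv p (eL j) := by
    intro j
    have hk := key p ({eL j} : Finset (Edges (n+1))) (fun _ b => if b = false then (1:ℝ) else 0)
    simpa using hk
  calc ∑ j ∈ Tset (n := n) M, ∑ σ : Orient (n+1), prOf p σ * (if σ (eL j) = false then (1:ℝ) else 0)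
      = ∑ j ∈ Tset (n := n) M, (1 - pv p (eL j)) := Finset.sum_congr rfl fun j _ => hone j
    _ ≤ ∑ _j ∈ Tset (n := n) M, q := Finset.sum_le_sum fun j _ => hpq (eL j)
    _ = (Tset (n := n) M).card * q := by rw [Finset.sum_const, nsmul_eq_mul]
    _ ≤ M * q := by
        have := card_Tset_le (n := n) M
        exact mul_le_mul_of_nonneg_right (by exact_mod_cast this) hq0

lemma PrB_le (h0 : ∀ e : Edges (n+1), 0 ≤ pv p e) (h1 : ∀ e : Edges (n+1), pv p e ≤ 1)
    (hpq : ∀ e : Edges (n+1), 1 - pv p e ≤ q) (hq0 : 0 ≤ q) (K : ℕ) :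
    Pr p (EvB K) ≤ (2/3)^K * (1 + q/2)^n := by
  classical
  set tL : Finset (Edges (n+1)) := Finset.image eL univ with htL
  have hprod : ∀ σ : Orient (n+1), ∏ e ∈ tL, (if σ e = false then (3/2:ℝ) else 1)
      = (3/2:ℝ) ^ (Dset σ).card := by
    intro σ
    rw [htL, Finset.prod_image (fun a _ b _ h => eL_injective h)]
    rw [Dset, ← Finset.prod_filter]
    rw [Finset.prod_const]
  have step := Pr_le_sum h0 h1 (E := EvB K)
      (fun σ => (2/3:ℝ)^K * ∏ e ∈ tL, (if σ e = false then (3/2:ℝ) else 1))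
      (fun σ hσ => by
        rw [hprod σ]
        have hKd : (K : ℕ) ≤ (Dset σ).card := hσ
        have h32 : (3/2:ℝ)^K ≤ (3/2:ℝ)^(Dset σ).card := pow_le_pow_right₀ (by norm_num) hKd
        calc (1:ℝ) = (2/3:ℝ)^K * (3/2:ℝ)^K := by
              rw [← mul_pow]; norm_num
          _ ≤ (2/3:ℝ)^K * (3/2:ℝ)^(Dset σ).card :=
              mul_le_mul_of_nonneg_left h32 (by positivity))
      (fun σ => by positivity)
  refine le_trans step ?_
  have heval : ∑ σ : Orient (n+1), prOf p σ *
      ((2/3:ℝ)^K * ∏ e ∈ tL, (if σ e = false then (3/2:ℝ) else 1))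
      = (2/3:ℝ)^K * ∏ e ∈ tL, (pv p e * 1 + (1 - pv p e) * (3/2)) := by
    have hk := key p tL (fun _ b => if b = false then (3/2:ℝ) else 1)
    calc ∑ σ : Orient (n+1), prOf p σ * ((2/3:ℝ)^K * ∏ e ∈ tL, (if σ e = false then (3/2:ℝ) else 1))
        = (2/3:ℝ)^K * ∑ σ : Orient (n+1), prOf p σ * ∏ e ∈ tL, (if σ e = false then (3/2:ℝ) else 1) := by
          rw [Finset.mul_sum]
          exact Finset.sum_congr rfl fun σ _ => by ring
      _ = (2/3:ℝ)^K * ∏ e ∈ tL, (pv p e * 1 + (1 - pv p e) * (3/2)) := by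
          rw [hk]
          norm_num
  rw [heval]
  have hfac : ∏ e ∈ tL, (pv p e * 1 + (1 - pv p e) * (3/2:ℝ)) ≤ (1 + q/2)^n := by
    have hle : ∀ e ∈ tL, (pv p e * 1 + (1 - pv p e) * (3/2:ℝ)) ≤ 1 + q/2 := by
      intro e _
      have := hpq e
      have := h1 e
      nlinarith
    have hnn : ∀ e ∈ tL, (0:ℝ) ≤ pv p e * 1 + (1 - pv p e) * (3/2:ℝ) := by
      intro e _
      have := h0 e
      have := h1 e
      nlinarith
    calc ∏ e ∈ tL, (pv p e * 1 + (1 - pv p e) * (3/2:ℝ))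
        ≤ ∏ _e ∈ tL, (1 + q/2) := Finset.prod_le_prod hnn hle
      _ = (1 + q/2) ^ tL.card := Finset.prod_const _
      _ ≤ (1 + q/2) ^ n := by
          apply pow_le_pow_right₀ (by linarith)
          calc tL.card ≤ (univ : Finset (Fin n)).card := Finset.card_image_le
            _ = n := by simp
  exact mul_le_mul_of_nonneg_left hfac (by positivity)

section CC
open Finset
variable {n : ℕ} {p : Fin (n+1) → Fin (n+1) → ℝ} {q : ℝ}

def chi (S : Finset (Fin n)) (M : ℕ) (l : Fin n) (b : Bool) : ℝ :=
  if (l ∈ S ↔ (M ≤ (l : ℕ) ∧ b = false)) then 1 else 0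

def Xj (σ : Orient (n+1)) (S : Finset (Fin n)) (j : Fin n) : ℝ :=
  ∏ l ∈ S.filter (fun l => j < l), (if σ (pEdge j l) = true then (1:ℝ) else 0)

def piJ (p : Fin (n+1) → Fin (n+1) → ℝ) (S : Finset (Fin n)) (j : Fin n) : ℝ :=
  ∏ l ∈ S.filter (fun l => j < l), pv p (pEdge j l)

def PS (p : Fin (n+1) → Fin (n+1) → ℝ) (S : Finset (Fin n)) (M : ℕ) : ℝ :=
  ∏ l : Fin n, (pv p (eL l) * chi S M l true + (1 - pv p (eL l)) * chi S M l false)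

def gC (S : Finset (Fin n)) (M : ℕ) (e : Edges (n+1)) (b : Bool) : ℝ :=
  if h : e.1.2 = Fin.last n then
    chi S M ((e.1.1).castPred (ne_of_lt (h ▸ e.2))) b
  else (if b = true then 1 else 0)

def tP (J S : Finset (Fin n)) : Finset (Edges (n+1)) :=
  ((J ×ˢ S).filter (fun q => q.1 < q.2)).image (fun q => pEdge q.1 q.2)

lemma pEdge_eq {j l : Fin n} (h : j < l) :
    pEdge j l = ⟨(j.castSucc, l.castSucc), Fin.castSucc_lt_castSucc_iff.2 h⟩ := by
  rw [pEdge, dif_pos h]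

lemma gC_eL (S : Finset (Fin n)) (M : ℕ) (l : Fin n) (b : Bool) :
    gC S M (eL l) b = chi S M l b := by
  simp [gC, eL, Fin.castPred_castSucc]

lemma gC_pEdge (S : Finset (Fin n)) (M : ℕ) {j l : Fin n} (h : j < l) (b : Bool) :
    gC S M (pEdge j l) b = (if b = true then 1 else 0) := by
  rw [pEdge_eq h, gC, dif_neg]
  exact ne_of_lt (Fin.castSucc_lt_last l)

lemma prod_tL (F : Edges (n+1) → ℝ) :
    ∏ e ∈ Finset.image (eL (n := n)) univ, F e = ∏ l : Fin n, F (eL l) :=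
  Finset.prod_image (fun a _ b _ h => eL_injective h)

lemma prod_tP (J S : Finset (Fin n)) (F : Edges (n+1) → ℝ) :
    ∏ e ∈ tP J S, F e = ∏ j ∈ J, ∏ l ∈ S.filter (fun l => j < l), F (pEdge j l) := by
  rw [tP, Finset.prod_image]
  · rw [Finset.prod_filter, Finset.prod_product]
    refine Finset.prod_congr rfl fun j _ => ?_
    rw [Finset.prod_filter]
  · intro a ha b hb hab
    simp only [Finset.coe_filter, Set.mem_setOf_eq] at ha hb
    beta_reduce at hab
    rw [pEdge_eq ha.2, pEdge_eq hb.2] at hab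
    have h1 := congrArg (fun e : Edges (n+1) => e.1.1) hab
    have h2 := congrArg (fun e : Edges (n+1) => e.1.2) hab
    simp only at h1 h2
    have := Fin.castSucc_injective n h1
    have := Fin.castSucc_injective n h2
    exact Prod.ext ‹a.1 = b.1› ‹a.2 = b.2›

lemma tL_tP_disjoint (J S : Finset (Fin n)) :
    Disjoint (Finset.image (eL (n := n)) univ) (tP J S) := by
  rw [Finset.disjoint_left]
  intro e he he'
  simp only [Finset.mem_image] at he
  rcases he with ⟨l, -, rfl⟩
  simp only [tP, Finset.mem_image, mem_filter] at he'
  rcases he' with ⟨a, ⟨-, hlt⟩, hae⟩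
  rw [pEdge_eq hlt] at hae
  have := congrArg (fun e : Edges (n+1) => e.1.2) hae
  simp only [eL] at this
  exact absurd this (ne_of_lt (Fin.castSucc_lt_last a.2))

lemma core_eval (S J : Finset (Fin n)) (M : ℕ) :
    ∑ σ : Orient (n+1), prOf p σ *
      ((∏ l : Fin n, chi S M l (σ (eL l))) * ∏ j ∈ J, Xj σ S j)
      = PS p S M * ∏ j ∈ J, piJ p S j := by
  classical
  have hpoint : ∀ σ : Orient (n+1),
      (∏ l : Fin n, chi S M l (σ (eL l))) * ∏ j ∈ J, Xj σ S j
      = ∏ e ∈ Finset.image (eL (n := n)) univ ∪ tP J S, gC S M e (σ e) := by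
    intro σ
    rw [Finset.prod_union (tL_tP_disjoint J S)]
    congr 1
    · rw [prod_tL]
      exact Finset.prod_congr rfl fun l _ => (gC_eL S M l _).symm
    · rw [prod_tP]
      refine Finset.prod_congr rfl fun j _ => ?_
      rw [Xj]
      refine Finset.prod_congr rfl fun l hl => ?_
      simp only [mem_filter] at hl
      exact (gC_pEdge S M hl.2 _).symm
  have hk := key p (Finset.image (eL (n := n)) univ ∪ tP J S) (gC S M)
  calc ∑ σ : Orient (n+1), prOf p σ *
      ((∏ l : Fin n, chi S M l (σ (eL l))) * ∏ j ∈ J, Xj σ S j)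
      = ∑ σ : Orient (n+1), prOf p σ *
          ∏ e ∈ Finset.image (eL (n := n)) univ ∪ tP J S, gC S M e (σ e) :=
        Finset.sum_congr rfl fun σ _ => by rw [hpoint σ]
    _ = ∏ e ∈ Finset.image (eL (n := n)) univ ∪ tP J S,
          (pv p e * gC S M e true + (1 - pv p e) * gC S M e false) := hk
    _ = PS p S M * ∏ j ∈ J, piJ p S j := by
        rw [Finset.prod_union (tL_tP_disjoint J S), prod_tL, prod_tP]
        congr 1
        · exact Finset.prod_congr rfl fun l _ => by rw [gC_eL, gC_eL]
        · refine Finset.prod_congr rfl fun j _ => ?_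
          rw [piJ]
          refine Finset.prod_congr rfl fun l hl => ?_
          simp only [mem_filter] at hl
          rw [gC_pEdge S M hl.2, gC_pEdge S M hl.2]
          simp

lemma sum_PS (M : ℕ) : ∑ S : Finset (Fin n), PS p S M = 1 := by
  classical
  set AA : Fin n → ℝ := fun l => if M ≤ (l : ℕ) then 1 - pv p (eL l) else 0 with hAA
  set BB : Fin n → ℝ := fun l => if M ≤ (l : ℕ) then pv p (eL l) else 1 with hBB
  have hform : ∀ S : Finset (Fin n), PS p S M = (∏ l ∈ S, AA l) * ∏ l ∈ univ \ S, BB l := by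
    intro S
    have hfac : ∀ l : Fin n,
        (pv p (eL l) * chi S M l true + (1 - pv p (eL l)) * chi S M l false)
        = (if l ∈ S then AA l else BB l) := by
      intro l
      by_cases hl : l ∈ S
      · have hchit : chi S M l true = 0 := by simp [chi, hl]
        have hchif : chi S M l false = (if M ≤ (l : ℕ) then 1 else 0) := by
          by_cases hM : M ≤ (l : ℕ) <;> simp [chi, hl, hM]
        rw [hchit, hchif, hAA]
        by_cases hM : M ≤ (l : ℕ) <;> simp [hl, hM]
      · have hchit : chi S M l true = 1 := by simp [chi, hl]
        have hchif : chi S M l false = (if M ≤ (l : ℕ) then 0 else 1) := by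
          by_cases hM : M ≤ (l : ℕ) <;> simp [chi, hl, hM]
        rw [hchit, hchif, hBB]
        by_cases hM : M ≤ (l : ℕ) <;> simp [hl, hM] <;> ring
    symm
    calc (∏ l ∈ S, AA l) * ∏ l ∈ univ \ S, BB l
        = (∏ l ∈ S, (if l ∈ S then AA l else BB l)) *
            ∏ l ∈ univ \ S, (if l ∈ S then AA l else BB l) := by
          congr 1
          · exact Finset.prod_congr rfl fun l hl => by rw [if_pos hl]
          · exact Finset.prod_congr rfl fun l hl => by
              rw [if_neg (Finset.mem_sdiff.1 hl).2]
      _ = ∏ l ∈ S ∪ univ \ S, (if l ∈ S then AA l else BB l) :=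
          (Finset.prod_union Finset.disjoint_sdiff).symm
      _ = ∏ l : Fin n, (if l ∈ S then AA l else BB l) := by
          rw [Finset.union_sdiff_of_subset (Finset.subset_univ S)]
      _ = PS p S M := (Finset.prod_congr rfl fun l _ => (hfac l).symm)
  calc ∑ S : Finset (Fin n), PS p S M
      = ∑ S ∈ (univ : Finset (Fin n)).powerset, (∏ l ∈ S, AA l) * ∏ l ∈ univ \ S, BB l := by
        rw [Finset.powerset_univ]
        exact Finset.sum_congr rfl fun S _ => hform S
    _ = ∏ l : Fin n, (AA l + BB l) := (Finset.prod_add AA BB univ).symm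
    _ = 1 := by
        refine Finset.prod_eq_one fun l _ => ?_
        by_cases hM : M ≤ (l : ℕ) <;> simp [hAA, hBB, hM]

lemma Xj_nonneg (σ : Orient (n+1)) (S : Finset (Fin n)) (j : Fin n) : 0 ≤ Xj σ S j :=
  Finset.prod_nonneg fun l _ => by split <;> norm_num

lemma Xj_le_one (σ : Orient (n+1)) (S : Finset (Fin n)) (j : Fin n) : Xj σ S j ≤ 1 :=
  Finset.prod_le_one (fun l _ => by split <;> norm_num) (fun l _ => by split <;> norm_num)

lemma chi_nonneg (S : Finset (Fin n)) (M : ℕ) (l : Fin n) (b : Bool) : 0 ≤ chi S M l b := by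
  rw [chi]; positivity

lemma PS_nonneg (h0 : ∀ e : Edges (n+1), 0 ≤ pv p e) (h1 : ∀ e : Edges (n+1), pv p e ≤ 1)
    (S : Finset (Fin n)) (M : ℕ) : 0 ≤ PS p S M := by
  refine Finset.prod_nonneg fun l _ => ?_
  have h0' := h0 (eL l); have h1' := h1 (eL l)
  have hct := chi_nonneg S M l true; have hcf := chi_nonneg S M l false
  have hA : 0 ≤ pv p (eL l) * chi S M l true := mul_nonneg h0' hct
  have hB : 0 ≤ (1 - pv p (eL l)) * chi S M l false := mul_nonneg (by linarith) hcf
  linarith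

lemma inner_eval (S : Finset (Fin n)) (M : ℕ) :
    ∑ σ : Orient (n+1), prOf p σ *
      ((∏ l : Fin n, chi S M l (σ (eL l))) * ∏ j ∈ Tset (n := n) M, (1 - Xj σ S j))
    = PS p S M * ∏ j ∈ Tset (n := n) M, (1 - piJ p S j) := by
  classical
  have hexp : ∀ (f : Fin n → ℝ), ∏ j ∈ Tset (n := n) M, (1 - f j)
      = ∑ J ∈ (Tset (n := n) M).powerset, (∏ j ∈ J, (-f j)) * ∏ j ∈ Tset (n := n) M \ J, (1:ℝ) := by
    intro f
    rw [← Finset.prod_add]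
    exact Finset.prod_congr rfl fun j _ => by ring
  have hXneg : ∀ (f : Fin n → ℝ) (J : Finset (Fin n)),
      ∏ j ∈ J, (-f j) = (-1)^J.card * ∏ j ∈ J, f j := by
    intro f J
    rw [← Finset.prod_const (-1:ℝ), ← Finset.prod_mul_distrib]
    exact Finset.prod_congr rfl fun j _ => by ring
  calc ∑ σ : Orient (n+1), prOf p σ *
      ((∏ l : Fin n, chi S M l (σ (eL l))) * ∏ j ∈ Tset (n := n) M, (1 - Xj σ S j))
      = ∑ σ : Orient (n+1), ∑ J ∈ (Tset (n := n) M).powerset,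
          (-1)^J.card * (prOf p σ *
            ((∏ l : Fin n, chi S M l (σ (eL l))) * ∏ j ∈ J, Xj σ S j)) := by
        refine Finset.sum_congr rfl fun σ _ => ?_
        rw [hexp (fun j => Xj σ S j), Finset.mul_sum, Finset.mul_sum]
        refine Finset.sum_congr rfl fun J _ => ?_
        rw [hXneg]
        rw [Finset.prod_const_one]
        ring
    _ = ∑ J ∈ (Tset (n := n) M).powerset, (-1)^J.card *
          ∑ σ : Orient (n+1), prOf p σ *
            ((∏ l : Fin n, chi S M l (σ (eL l))) * ∏ j ∈ J, Xj σ S j) := by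
        rw [Finset.sum_comm]
        exact Finset.sum_congr rfl fun J _ => by rw [Finset.mul_sum]
    _ = ∑ J ∈ (Tset (n := n) M).powerset, (-1)^J.card *
          (PS p S M * ∏ j ∈ J, piJ p S j) :=
        Finset.sum_congr rfl fun J _ => by rw [core_eval]
    _ = PS p S M * ∏ j ∈ Tset (n := n) M, (1 - piJ p S j) := by
        rw [hexp (fun j => piJ p S j), Finset.mul_sum]
        refine Finset.sum_congr rfl fun J _ => ?_
        rw [hXneg, Finset.prod_const_one]
        ring

lemma PrC_le (h0 : ∀ e : Edges (n+1), 0 ≤ pv p e) (h1 : ∀ e : Edges (n+1), pv p e ≤ 1)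
    (hpq : ∀ e : Edges (n+1), 1 - pv p e ≤ q) (hq0 : 0 ≤ q) (hq1 : q ≤ 1)
    (M K : ℕ) (hMn : M ≤ n) :
    Pr p (EvC M K) ≤ (1 - (1-q)^K)^M := by
  classical
  have h1q0 : (0:ℝ) ≤ 1 - q := by linarith
  have hbd0 : (0:ℝ) ≤ 1 - (1-q)^K := by
    have : (1-q)^K ≤ 1 := pow_le_one₀ h1q0 (by linarith)
    linarith
  have hbd : (0:ℝ) ≤ (1 - (1-q)^K)^M := pow_nonneg hbd0 M
  have htermnn : ∀ (σ : Orient (n+1)) (S : Finset (Fin n)),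
      0 ≤ (if S.card < K then (1:ℝ) else 0) *
        ((∏ l : Fin n, chi S M l (σ (eL l))) * ∏ j ∈ Tset (n := n) M, (1 - Xj σ S j)) := by
    intro σ S
    refine mul_nonneg (by split <;> norm_num) (mul_nonneg ?_ ?_)
    · exact Finset.prod_nonneg fun l _ => chi_nonneg S M l _
    · exact Finset.prod_nonneg fun j _ => by linarith [Xj_le_one σ S j]
  have step := Pr_le_sum h0 h1 (E := EvC M K)
      (fun σ => ∑ S : Finset (Fin n), (if S.card < K then (1:ℝ) else 0) *
        ((∏ l : Fin n, chi S M l (σ (eL l))) * ∏ j ∈ Tset (n := n) M, (1 - Xj σ S j)))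
      (fun σ hσ => by
        rcases hσ with ⟨S, hSK, hSiff, hcov⟩
        have hterm : (if S.card < K then (1:ℝ) else 0) *
            ((∏ l : Fin n, chi S M l (σ (eL l))) *
              ∏ j ∈ Tset (n := n) M, (1 - Xj σ S j)) = 1 := by
          rw [if_pos hSK]
          have hchi : ∏ l : Fin n, chi S M l (σ (eL l)) = 1 :=
            Finset.prod_eq_one fun l _ => if_pos (hSiff l)
          have hcvr : ∏ j ∈ Tset (n := n) M, (1 - Xj σ S j) = 1 := by
            refine Finset.prod_eq_one fun j hj => ?_
            have hjM : (j : ℕ) < M := (Finset.mem_filter.1 hj).2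
            rcases hcov j hjM with ⟨l, hlS, hjl, hfalse⟩
            have hX : Xj σ S j = 0 := by
              refine Finset.prod_eq_zero (Finset.mem_filter.2 ⟨hlS, hjl⟩) ?_
              rw [if_neg]
              simp [hfalse]
            rw [hX]; ring
          rw [hchi, hcvr]; ring
        calc (1:ℝ) = (if S.card < K then (1:ℝ) else 0) *
            ((∏ l : Fin n, chi S M l (σ (eL l))) *
              ∏ j ∈ Tset (n := n) M, (1 - Xj σ S j)) := hterm.symm
          _ ≤ _ := Finset.single_le_sum (fun S' _ => htermnn σ S') (Finset.mem_univ S))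
      (fun σ => Finset.sum_nonneg fun S _ => htermnn σ S)
  refine le_trans step ?_
  have hswap : ∑ σ : Orient (n+1), prOf p σ *
      ∑ S : Finset (Fin n), (if S.card < K then (1:ℝ) else 0) *
        ((∏ l : Fin n, chi S M l (σ (eL l))) * ∏ j ∈ Tset (n := n) M, (1 - Xj σ S j))
      = ∑ S : Finset (Fin n), (if S.card < K then (1:ℝ) else 0) *
          ∑ σ : Orient (n+1), prOf p σ *
            ((∏ l : Fin n, chi S M l (σ (eL l))) * ∏ j ∈ Tset (n := n) M, (1 - Xj σ S j)) := by
    simp_rw [Finset.mul_sum]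
    rw [Finset.sum_comm]
    refine Finset.sum_congr rfl fun S _ => Finset.sum_congr rfl fun σ _ => by ring
  rw [hswap]
  have hinner : ∀ S : Finset (Fin n),
      (if S.card < K then (1:ℝ) else 0) *
        ∑ σ : Orient (n+1), prOf p σ *
          ((∏ l : Fin n, chi S M l (σ (eL l))) * ∏ j ∈ Tset (n := n) M, (1 - Xj σ S j))
      ≤ PS p S M * (1 - (1-q)^K)^M := by
    intro S
    rw [inner_eval]
    by_cases hSK : S.card < K
    · rw [if_pos hSK, one_mul]
      refine mul_le_mul_of_nonneg_left ?_ (PS_nonneg h0 h1 S M)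
      have hpij_le : ∀ j : Fin n, piJ p S j ≤ 1 :=
        fun j => Finset.prod_le_one (fun l _ => h0 _) (fun l _ => h1 _)
      have hpij_ge : ∀ j : Fin n, (1-q)^K ≤ piJ p S j := by
        intro j
        have hcards : (S.filter (fun l => j < l)).card ≤ K :=
          le_trans (Finset.card_le_card (Finset.filter_subset _ S)) (le_of_lt hSK)
        calc (1-q)^K ≤ (1-q)^(S.filter (fun l => j < l)).card :=
              pow_le_pow_of_le_one h1q0 (by linarith) hcards
          _ = ∏ l ∈ S.filter (fun l => j < l), (1-q) := (Finset.prod_const _).symm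
          _ ≤ ∏ l ∈ S.filter (fun l => j < l), pv p (pEdge j l) :=
              Finset.prod_le_prod (fun l _ => h1q0) (fun l _ => by linarith [hpq (pEdge j l)])
      calc ∏ j ∈ Tset (n := n) M, (1 - piJ p S j)
          ≤ ∏ _j ∈ Tset (n := n) M, (1 - (1-q)^K) :=
            Finset.prod_le_prod (fun j _ => by linarith [hpij_le j])
              (fun j _ => by linarith [hpij_ge j])
        _ = (1 - (1-q)^K) ^ (Tset (n := n) M).card := Finset.prod_const _
        _ = (1 - (1-q)^K) ^ M := by rw [card_Tset M hMn]
    · rw [if_neg hSK, zero_mul]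
      exact mul_nonneg (PS_nonneg h0 h1 S M) hbd
  calc ∑ S : Finset (Fin n), (if S.card < K then (1:ℝ) else 0) *
        ∑ σ : Orient (n+1), prOf p σ *
          ((∏ l : Fin n, chi S M l (σ (eL l))) * ∏ j ∈ Tset (n := n) M, (1 - Xj σ S j))
      ≤ ∑ S : Finset (Fin n), PS p S M * (1 - (1-q)^K)^M :=
        Finset.sum_le_sum fun S _ => hinner S
    _ = (1 - (1-q)^K)^M := by
        rw [← Finset.sum_mul, sum_PS, one_mul]

lemma master (h0 : ∀ e : Edges (n+1), 0 ≤ pv p e) (h1 : ∀ e : Edges (n+1), pv p e ≤ 1)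
    (hpq : ∀ e : Edges (n+1), 1 - pv p e ≤ q) (hq0 : 0 ≤ q) (hq1 : q ≤ 1)
    (M K : ℕ) (hMn : M ≤ n) :
    Pr p (King (n := n)) ≤ M * q + ((2/3)^K * (1 + q/2)^n + (1 - (1-q)^K)^M) := by
  have hsub := king_subset (n := n) M K
  have hm := Pr_mono h0 h1 hsub
  have hu1 := Pr_union_le h0 h1 (EvA (n := n) M ∪ EvB K) (EvC M K)
  have hu2 := Pr_union_le h0 h1 (EvA (n := n) M) (EvB K)
  have hA := PrA_le h0 h1 hpq hq0 M
  have hB := PrB_le h0 h1 hpq hq0 K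
  have hC := PrC_le h0 h1 hpq hq0 hq1 M K hMn
  linarith

end CC
end Bounds

section Asymp
open Filter Real

noncomputable def qq (m : ℕ) : ℝ := 0.6 * Real.sqrt (Real.log m / m)
noncomputable def Mn (m : ℕ) : ℕ := ⌈(m:ℝ) ^ (0.49:ℝ)⌉₊
noncomputable def Kn (m : ℕ) : ℕ := ⌈1.3 * (m:ℝ) * qq m⌉₊

lemma qq_nonneg (m : ℕ) : 0 ≤ qq m := by
  unfold qq; positivity

lemma tendsto_qq : Tendsto qq atTop (nhds 0) := by
  have h1 : Tendsto (fun x : ℝ => Real.log x / x ^ (1:ℝ)) atTop (nhds 0) :=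
    (isLittleO_log_rpow_atTop one_pos).tendsto_div_nhds_zero
  have h1' : Tendsto (fun x : ℝ => Real.log x / x) atTop (nhds 0) :=
    h1.congr fun x => by rw [Real.rpow_one]
  have h2 : Tendsto (fun m : ℕ => Real.log m / m) atTop (nhds 0) :=
    h1'.comp tendsto_natCast_atTop_atTop
  have h3 := h2.sqrt
  rw [Real.sqrt_zero] at h3
  have h4 := h3.const_mul (0.6:ℝ)
  rw [mul_zero] at h4
  exact h4

lemma tendsto_T1 : Tendsto (fun m : ℕ => (Mn m : ℝ) * qq m) atTop (nhds 0) := by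
  have hmain : Tendsto (fun m : ℕ => Real.log m / (m:ℝ) ^ (0.02:ℝ)) atTop (nhds 0) :=
    ((isLittleO_log_rpow_atTop (by norm_num : (0:ℝ) < 0.02)).tendsto_div_nhds_zero).comp
      tendsto_natCast_atTop_atTop
  have hsq := hmain.sqrt
  rw [Real.sqrt_zero] at hsq
  have hg : Tendsto (fun m : ℕ => 1.2 * Real.sqrt (Real.log m / (m:ℝ)^(0.02:ℝ))) atTop (nhds 0) := by
    simpa using hsq.const_mul (1.2:ℝ)
  refine squeeze_zero' ?_ ?_ hg
  · exact Filter.Eventually.of_forall fun m => mul_nonneg (Nat.cast_nonneg _) (qq_nonneg m)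
  · filter_upwards [eventually_ge_atTop 3] with m hm3
    set x : ℝ := (m:ℝ) with hxdef
    have hx1 : (1:ℝ) ≤ x := by
      rw [hxdef]
      exact_mod_cast (by omega : (1:ℕ) ≤ m)
    have hx0 : (0:ℝ) < x := by linarith
    have hlog0 : 0 ≤ Real.log x := Real.log_nonneg hx1
    have hM2 : (Mn m : ℝ) ≤ 2 * x ^ (0.49:ℝ) := by
      have hceil : (Mn m : ℝ) < x ^ (0.49:ℝ) + 1 :=
        Nat.ceil_lt_add_one (Real.rpow_nonneg hx0.le _)
      have h1x : (1:ℝ) ≤ x ^ (0.49:ℝ) := by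
        calc (1:ℝ) = x ^ (0:ℝ) := (Real.rpow_zero x).symm
          _ ≤ x ^ (0.49:ℝ) := Real.rpow_le_rpow_of_exponent_le hx1 (by norm_num)
      linarith
    have hkey : x ^ (0.49:ℝ) * Real.sqrt (Real.log x / x)
        = Real.sqrt (Real.log x / x ^ (0.02:ℝ)) := by
      have hs : x ^ (0.49:ℝ) = Real.sqrt (x ^ (0.98:ℝ)) := by
        rw [Real.sqrt_eq_rpow, ← Real.rpow_mul hx0.le]
        norm_num
      rw [hs, ← Real.sqrt_mul (Real.rpow_nonneg hx0.le _)]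
      congr 1
      rw [div_eq_mul_inv, div_eq_mul_inv]
      rw [show x ^ (0.98:ℝ) * (Real.log x * x⁻¹) = Real.log x * (x ^ (0.98:ℝ) * x⁻¹) by ring]
      congr 1
      rw [← Real.rpow_neg_one x, ← Real.rpow_add hx0, ← Real.rpow_neg hx0.le]
      norm_num
    have hqq : qq m = 0.6 * Real.sqrt (Real.log x / x) := rfl
    calc (Mn m : ℝ) * qq m ≤ (2 * x ^ (0.49:ℝ)) * qq m :=
          mul_le_mul_of_nonneg_right hM2 (qq_nonneg m)
      _ = 1.2 * (x ^ (0.49:ℝ) * Real.sqrt (Real.log x / x)) := by rw [hqq]; ring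
      _ = 1.2 * Real.sqrt (Real.log x / x ^ (0.02:ℝ)) := by rw [hkey]

lemma log_32 : (2/5:ℝ) ≤ Real.log (3/2) := by
  rw [Real.le_log_iff_exp_le (by norm_num : (0:ℝ) < 3/2)]
  have h5 : Real.exp (2/5) ^ (5:ℕ) = Real.exp 2 := by
    rw [← Real.exp_nat_mul]; norm_num
  have he : Real.exp 2 ≤ (3/2:ℝ)^(5:ℕ) := by
    have h1 := Real.exp_one_lt_d9
    have h2 : Real.exp 2 = Real.exp 1 * Real.exp 1 := by rw [← Real.exp_add]; norm_num
    have hp := Real.exp_pos 1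
    nlinarith
  exact le_of_pow_le_pow_left₀ (n := 5) (by norm_num) (by norm_num) (by rw [h5]; exact he)

lemma xqq_ge (m : ℕ) (hm1 : 1 ≤ m) (hL1 : 1 ≤ Real.log m) :
    0.6 * Real.sqrt m ≤ (m:ℝ) * qq m := by
  have hx0 : (0:ℝ) < m := by exact_mod_cast hm1
  have hdiv : 1/(m:ℝ) ≤ Real.log m / m := by gcongr
  have hs := Real.sqrt_le_sqrt hdiv
  have h1 : Real.sqrt (1/(m:ℝ)) = 1 / Real.sqrt m := by
    rw [one_div, one_div, Real.sqrt_inv]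
  have hxs : (m:ℝ) / Real.sqrt m = Real.sqrt m := Real.div_sqrt
  rw [h1] at hs
  have hkey : (m:ℝ) * (0.6 * (1/Real.sqrt m)) = 0.6 * Real.sqrt m := by
    calc (m:ℝ) * (0.6 * (1/Real.sqrt m)) = 0.6 * ((m:ℝ)/Real.sqrt m) := by ring
      _ = 0.6 * Real.sqrt m := by rw [hxs]
  calc 0.6 * Real.sqrt (m:ℝ) = (m:ℝ) * (0.6 * (1/Real.sqrt m)) := hkey.symm
    _ ≤ (m:ℝ) * (0.6 * Real.sqrt (Real.log m / m)) := by
        refine mul_le_mul_of_nonneg_left ?_ hx0.le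
        exact mul_le_mul_of_nonneg_left hs (by norm_num)
    _ = (m:ℝ) * qq m := rfl

lemma T2_bound (m nn : ℕ) (hm1 : 1 ≤ m) (hL1 : 1 ≤ Real.log m) (hnn : nn ≤ m) :
    (2/3:ℝ)^(Kn m) * (1 + qq m/2)^nn ≤ Real.exp (-(0.012) * Real.sqrt m) := by
  have hq0 := qq_nonneg m
  have hx0 : (0:ℝ) < m := by exact_mod_cast hm1
  have hK1 : 1.3 * (m:ℝ) * qq m ≤ (Kn m : ℝ) := Nat.le_ceil _
  have hK0 : (0:ℝ) ≤ (Kn m : ℝ) := Nat.cast_nonneg _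
  have h23 : (2/3:ℝ)^(Kn m) = Real.exp ((Kn m : ℝ) * Real.log (2/3)) := by
    rw [Real.exp_nat_mul, Real.exp_log (by norm_num : (0:ℝ) < 2/3)]
  have hplus : (1 + qq m/2)^nn ≤ Real.exp ((nn:ℝ) * (qq m/2)) := by
    rw [Real.exp_nat_mul]
    exact pow_le_pow_left₀ (by linarith) (by linarith [Real.add_one_le_exp (qq m/2)]) nn
  have hcomb : (2/3:ℝ)^(Kn m) * (1 + qq m/2)^nn
      ≤ Real.exp ((Kn m : ℝ) * Real.log (2/3) + (nn:ℝ) * (qq m/2)) := by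
    rw [Real.exp_add, h23]
    exact mul_le_mul_of_nonneg_left hplus (Real.exp_pos _).le
  refine le_trans hcomb (Real.exp_le_exp.2 ?_)
  have hlog23 : Real.log (2/3:ℝ) = - Real.log (3/2) := by
    rw [show (2/3:ℝ) = (3/2)⁻¹ by norm_num, Real.log_inv]
  have hxqq := xqq_ge m hm1 hL1
  have e1 : (Kn m:ℝ) * Real.log (2/3) ≤ (Kn m:ℝ) * (-(2/5)) := by
    refine mul_le_mul_of_nonneg_left ?_ hK0
    rw [hlog23]
    linarith [log_32]
  have e2 : (Kn m:ℝ) * (-(2/5)) ≤ (1.3 * (m:ℝ) * qq m) * (-(2/5)) :=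
    mul_le_mul_of_nonpos_right hK1 (by norm_num)
  have e3 : (nn:ℝ) * (qq m/2) ≤ (m:ℝ) * (qq m/2) := by
    refine mul_le_mul_of_nonneg_right ?_ (by linarith)
    exact_mod_cast hnn
  linarith

set_option maxHeartbeats 1000000 in
lemma T3_bound (m : ℕ) (hm1 : 1 ≤ m) (hL1 : 1 ≤ Real.log m) (hq3 : qq m ≤ 0.003) :
    (1 - (1 - qq m)^(Kn m))^(Mn m) ≤ Real.exp (-((m:ℝ) ^ (0.01:ℝ))) := by
  have hq0 := qq_nonneg m
  set Q : ℝ := qq m with hQdef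
  have hx0 : (0:ℝ) < m := by exact_mod_cast hm1
  have hx1 : (1:ℝ) ≤ m := by exact_mod_cast hm1
  have h1Q : (0:ℝ) < 1 - Q := by linarith
  have hL0 : (0:ℝ) ≤ Real.log m := by linarith
  have hlogQ : -(Q + 2*Q^2) ≤ Real.log (1 - Q) := by
    have hinv := Real.log_le_sub_one_of_pos (show (0:ℝ) < (1-Q)⁻¹ by positivity)
    rw [Real.log_inv] at hinv
    have hid : (1-Q)⁻¹ - 1 = Q / (1-Q) := by field_simp; ring
    have hdiv : Q / (1-Q) ≤ Q + 2*Q^2 := by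
      rw [div_le_iff₀ h1Q]
      nlinarith
    linarith
  have hKup : (Kn m : ℝ) ≤ 1.3*(m:ℝ)*Q + 1 := by
    have h := Nat.ceil_lt_add_one (show (0:ℝ) ≤ 1.3*(m:ℝ)*qq m by positivity)
    rw [Kn]
    linarith [h]
  have hQ2 : (m:ℝ) * Q^2 = 0.36 * Real.log m := by
    have hs : Q^2 = 0.36 * (Real.log m / m) := by
      rw [hQdef]
      unfold qq
      rw [mul_pow, Real.sq_sqrt (by positivity)]
      norm_num
    rw [hs]
    field_simp
  have hxQ3 : (m:ℝ) * Q^3 = 0.36 * Real.log m * Q := by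
    have h : (m:ℝ) * Q^3 = ((m:ℝ) * Q^2) * Q := by ring
    rw [h, hQ2]
  have hD : (Kn m : ℝ) * (Q + 2*Q^2) ≤ 0.48 * Real.log m := by
    have hs0 : (0:ℝ) ≤ Q + 2*Q^2 := by positivity
    have step1 : (Kn m : ℝ) * (Q + 2*Q^2) ≤ (1.3*(m:ℝ)*Q + 1) * (Q + 2*Q^2) :=
      mul_le_mul_of_nonneg_right hKup hs0
    have hLQ : Real.log m * Q ≤ 0.003 * Real.log m := by nlinarith
    have hQQ : Q^2 ≤ 0.003*Q := by nlinarith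
    nlinarith [step1, hQ2, hxQ3, hL1, hq0, hq3, hLQ, hQQ]
  have hE : (m:ℝ) ^ (-(0.48:ℝ)) ≤ (1 - Q)^(Kn m) := by
    have h1 : ((1:ℝ) - Q)^(Kn m) = Real.exp ((Kn m:ℝ) * Real.log (1-Q)) := by
      rw [Real.exp_nat_mul, Real.exp_log h1Q]
    have hK0 : (0:ℝ) ≤ (Kn m:ℝ) := Nat.cast_nonneg _
    have h2 := mul_le_mul_of_nonneg_left hlogQ hK0
    rw [h1, Real.rpow_def_of_pos hx0]
    apply Real.exp_le_exp.2
    nlinarith [hD, h2]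
  have hpow1 : (1 - Q)^(Kn m) ≤ 1 := pow_le_one₀ (by linarith) (by linarith)
  have h0le : (0:ℝ) ≤ 1 - (1-Q)^(Kn m) := by linarith
  have hr1 : (m:ℝ) ^ (-(0.48:ℝ)) ≤ 1 :=
    Real.rpow_le_one_of_one_le_of_nonpos hx1 (by norm_num)
  have hr0 : (0:ℝ) ≤ (m:ℝ) ^ (-(0.48:ℝ)) := Real.rpow_nonneg hx0.le _
  have hMge : (m:ℝ) ^ (0.49:ℝ) ≤ (Mn m : ℝ) := Nat.le_ceil _
  calc (1 - (1-Q)^(Kn m))^(Mn m)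
      ≤ (1 - (m:ℝ)^(-(0.48:ℝ)))^(Mn m) := pow_le_pow_left₀ h0le (by linarith [hE]) _
    _ ≤ (Real.exp (-((m:ℝ)^(-(0.48:ℝ)))))^(Mn m) :=
        pow_le_pow_left₀ (by linarith)
          (by linarith [Real.add_one_le_exp (-((m:ℝ)^(-(0.48:ℝ))))]) _
    _ = Real.exp ((Mn m : ℝ) * (-((m:ℝ)^(-(0.48:ℝ))))) := (Real.exp_nat_mul _ _).symm
    _ ≤ Real.exp (-((m:ℝ) ^ (0.01:ℝ))) := by
        apply Real.exp_le_exp.2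
        have hsplit : (m:ℝ) ^ (0.01:ℝ) = (m:ℝ) ^ (0.49:ℝ) * (m:ℝ) ^ (-(0.48:ℝ)) := by
          rw [← Real.rpow_add hx0]
          norm_num
        have hmul := mul_le_mul_of_nonneg_right hMge hr0
        nlinarith [hmul]

lemma Mn_le (m : ℕ) (hm : 16 ≤ m) : Mn m + 1 ≤ m := by
  have hx16 : (16:ℝ) ≤ m := by exact_mod_cast hm
  have hx0 : (0:ℝ) < m := by linarith
  have hx1 : (1:ℝ) ≤ m := by linarith
  have hceil : (Mn m : ℝ) < (m:ℝ) ^ (0.49:ℝ) + 1 :=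
    Nat.ceil_lt_add_one (Real.rpow_nonneg hx0.le _)
  have hsq : (m:ℝ) ^ (0.49:ℝ) ≤ Real.sqrt m := by
    rw [Real.sqrt_eq_rpow]
    exact Real.rpow_le_rpow_of_exponent_le hx1 (by norm_num)
  have hs2 : Real.sqrt (m:ℝ) ≤ (m:ℝ)/2 := by
    have h1 := Real.sq_sqrt hx0.le
    have h2 := Real.sqrt_nonneg (m:ℝ)
    nlinarith [sq_nonneg (Real.sqrt (m:ℝ) - 4)]
  have hfin : ((Mn m + 1 : ℕ) : ℝ) ≤ (m:ℝ) := by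
    push_cast
    linarith
  exact_mod_cast hfin

lemma tendsto_exp_neg_sqrt :
    Filter.Tendsto (fun m : ℕ => Real.exp (-(0.012) * Real.sqrt m)) Filter.atTop (nhds 0) := by
  have hsqrt : Filter.Tendsto Real.sqrt Filter.atTop Filter.atTop :=
    (tendsto_rpow_atTop (by norm_num : (0:ℝ) < 1/2)).congr fun x => (Real.sqrt_eq_rpow x).symm
  have h1 : Filter.Tendsto (fun m : ℕ => Real.sqrt m) Filter.atTop Filter.atTop :=
    hsqrt.comp tendsto_natCast_atTop_atTop
  have h2 : Filter.Tendsto (fun m : ℕ => -(0.012) * Real.sqrt m) Filter.atTop Filter.atBot := by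
    have h3 := tendsto_neg_atTop_atBot.comp (h1.const_mul_atTop (show (0:ℝ) < 0.012 by norm_num))
    refine h3.congr fun m => ?_
    simp [Function.comp]
  exact Real.tendsto_exp_atBot.comp h2

lemma tendsto_exp_neg_rpow :
    Filter.Tendsto (fun m : ℕ => Real.exp (-((m:ℝ) ^ (0.01:ℝ)))) Filter.atTop (nhds 0) := by
  have h1 : Filter.Tendsto (fun m : ℕ => (m:ℝ) ^ (0.01:ℝ)) Filter.atTop Filter.atTop :=
    (tendsto_rpow_atTop (by norm_num : (0:ℝ) < 0.01)).comp tendsto_natCast_atTop_atTop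
  exact Real.tendsto_exp_atBot.comp (tendsto_neg_atTop_atBot.comp h1)

end Asymp
end Aux

theorem stmt13' (p : ∀ n : ℕ, Fin n → Fin n → ℝ)
    (hp01 : ∀ n : ℕ, ∀ i j : Fin n, i < j → 0 ≤ p n i j ∧ p n i j ≤ 1)
    (hp : ∀ n : ℕ, ∀ i j : Fin n, i < j →
      1 - p n i j ≤ 0.6 * Real.sqrt (Real.log n / n)) :
    Filter.Tendsto
      (fun n : ℕ => Pr (p (n + 1)) {σ : Orient (n + 1) | ∀ j : Fin (n + 1),
        j ≠ Fin.last n → beats σ (Fin.last n) j ∨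
          ∃ l : Fin (n + 1), beats σ (Fin.last n) l ∧ beats σ l j})
      Filter.atTop (nhds 0) := by
  have hcomp : Filter.Tendsto (fun n : ℕ => n + 1) Filter.atTop Filter.atTop :=
    Filter.tendsto_add_atTop_nat 1
  have hg : Filter.Tendsto (fun n : ℕ => (Aux.Mn (n+1) : ℝ) * Aux.qq (n+1) +
      (Real.exp (-(0.012) * Real.sqrt ((n+1:ℕ) : ℝ)) +
        Real.exp (-(((n+1:ℕ):ℝ) ^ (0.01:ℝ))))) Filter.atTop (nhds 0) := by
    have t1 := Aux.tendsto_T1.comp hcomp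
    have t2 := Aux.tendsto_exp_neg_sqrt.comp hcomp
    have t3 := Aux.tendsto_exp_neg_rpow.comp hcomp
    have := t1.add (t2.add t3)
    simpa using this
  refine squeeze_zero' ?_ ?_ hg
  · refine Filter.Eventually.of_forall fun n => ?_
    exact Aux.Pr_nonneg (fun e => (hp01 (n+1) _ _ e.2).1) (fun e => (hp01 (n+1) _ _ e.2).2) _
  · have hq' : Filter.Tendsto (fun n : ℕ => Aux.qq (n+1)) Filter.atTop (nhds 0) :=
      Aux.tendsto_qq.comp hcomp
    have hE1 : ∀ᶠ n : ℕ in Filter.atTop, Aux.qq (n+1) < 0.003 :=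
      hq'.eventually_lt_const (by norm_num)
    have hL' : Filter.Tendsto (fun n : ℕ => Real.log (((n+1:ℕ)):ℝ)) Filter.atTop Filter.atTop :=
      (Real.tendsto_log_atTop.comp tendsto_natCast_atTop_atTop).comp hcomp
    have hE2 : ∀ᶠ n : ℕ in Filter.atTop, 1 ≤ Real.log (((n+1:ℕ)):ℝ) :=
      hL'.eventually_ge_atTop 1
    have hE3 : ∀ᶠ n : ℕ in Filter.atTop, 16 ≤ n + 1 :=
      (Filter.eventually_ge_atTop 15).mono fun n h => by omega
    filter_upwards [hE1, hE2, hE3] with n h1 h2 h3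
    have h0e : ∀ e : Edges (n+1), 0 ≤ Aux.pv (p (n+1)) e := fun e => (hp01 (n+1) _ _ e.2).1
    have h1e : ∀ e : Edges (n+1), Aux.pv (p (n+1)) e ≤ 1 := fun e => (hp01 (n+1) _ _ e.2).2
    have hpqe : ∀ e : Edges (n+1), 1 - Aux.pv (p (n+1)) e ≤ Aux.qq (n+1) :=
      fun e => hp (n+1) _ _ e.2
    have hq0 := Aux.qq_nonneg (n+1)
    have hMn : Aux.Mn (n+1) ≤ n := by
      have := Aux.Mn_le (n+1) h3
      omega
    have hmaster := Aux.master h0e h1e hpqe hq0 (by linarith)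
      (Aux.Mn (n+1)) (Aux.Kn (n+1)) hMn
    have hT2 := Aux.T2_bound (n+1) n (by omega) h2 (by omega)
    have hT3 := Aux.T3_bound (n+1) (by omega) h2 (le_of_lt h1)
    exact le_trans hmaster (by linarith)

/-- if, for `i > j`, the edge `a_i → a_j` appears with probability at most
`0.6·√(log n / n)` (in our encoding: `1 - p i j ≤ 0.6·√(log n / n)` for `i < j`), then the
probability that the last alternative `a_n` is a king (reaches every other alternative by a
directed path of length at most two) tends to `0`; hence w.h.p. `UC(T) ≠ A`. -/
theorem stmt13 (p : ∀ n : ℕ, Fin n → Fin n → ℝ)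
    (hp01 : ∀ n : ℕ, ∀ i j : Fin n, i < j → 0 ≤ p n i j ∧ p n i j ≤ 1)
    (hp : ∀ n : ℕ, ∀ i j : Fin n, i < j →
      1 - p n i j ≤ 0.6 * Real.sqrt (Real.log n / n)) :
    Filter.Tendsto
      (fun n : ℕ => Pr (p (n + 1)) {σ : Orient (n + 1) | ∀ j : Fin (n + 1),
        j ≠ Fin.last n → beats σ (Fin.last n) j ∨
          ∃ l : Fin (n + 1), beats σ (Fin.last n) l ∧ beats σ l j})
      Filter.atTop (nhds 0) := by
  exact stmt13' p hp01 hp
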